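/- arXiv:1805.07592 — 2 statements merged into one kernel-verified Lean document; each statement's English description precedes it below -/
import Mathlib

section
/- KL upper bound for a leaf: let Z_u^y, Z_ū^y, Z_u^ȳ, Z_ū^ȳ be nonnegative reals with Z_u^y > 0 and Z_ū^y > 0, set Z_u = Z_u^y + Z_u^ȳ, Z_ū = Z_ū^y + Z_ū^ȳ, Z_ρ^y = Z_u^y + Z_ū^y, Z_ρ = Z_u + Z_ū, and suppose Z_ū ≤ w for some w ≥ 0. Then KL(Bern(Z_u^y/Z_ρ^y) ‖ Bern(Z_u/Z_ρ)) ≤ lg((Z_u + w)/Z_u^y). -/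
noncomputable def klBern (p q : ℝ) : ℝ :=
  p * Real.logb 2 (p / q) + (1 - p) * Real.logb 2 ((1 - p) / (1 - q))

/-- KL upper bound for a leaf.
`Zuy`/`Zvy` are the seen/unseen weights with label y, `Zub`/`Zvb` with other labels. -/
theorem stmt7 (Zuy Zvy Zub Zvb w : ℝ)
    (hZuy : 0 < Zuy) (hZvy : 0 < Zvy) (hZub : 0 ≤ Zub) (hZvb : 0 ≤ Zvb)
    (hw : 0 ≤ w) (hwub : Zvy + Zvb ≤ w) :
    klBern (Zuy / (Zuy + Zvy)) ((Zuy + Zub) / ((Zuy + Zub) + (Zvy + Zvb)))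
      ≤ Real.logb 2 (((Zuy + Zub) + w) / Zuy) := by
  set A := Zuy + Zvy with hA
  set U := Zuy + Zub with hU
  set V := Zvy + Zvb with hV
  have hApos : 0 < A := by positivity
  have hUpos : 0 < U := by positivity
  have hVpos : 0 < V := by positivity
  have hRpos : 0 < U + V := by positivity
  have h1p : 1 - Zuy / A = Zvy / A := by field_simp; ring
  have h1q : 1 - U / (U + V) = V / (U + V) := by field_simp; ring
  have hr1 : (Zuy / A) / (U / (U + V)) = (Zuy / U) * ((U + V) / A) := by
    field_simp
  have hr2 : (Zvy / A) / (V / (U + V)) = (Zvy / V) * ((U + V) / A) := by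
    field_simp
  have hp : 0 < Zuy / A := by positivity
  have h1ppos : 0 < Zvy / A := by positivity
  unfold klBern
  rw [h1p, h1q, hr1, hr2,
    Real.logb_mul (by positivity) (by positivity),
    Real.logb_mul (by positivity) (by positivity)]
  have key : Zuy / A * (Real.logb 2 (Zuy / U) + Real.logb 2 ((U + V) / A)) +
      Zvy / A * (Real.logb 2 (Zvy / V) + Real.logb 2 ((U + V) / A))
      ≤ Real.logb 2 ((U + V) / A) := by
    have hsum : Zuy / A + Zvy / A = 1 := by field_simp; linarith [hA]
    have hb1 : Real.logb 2 (Zuy / U) ≤ 0 :=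
      Real.logb_nonpos one_lt_two (by positivity)
        (by rw [div_le_one hUpos]; linarith)
    have hb2 : Real.logb 2 (Zvy / V) ≤ 0 :=
      Real.logb_nonpos one_lt_two (by positivity)
        (by rw [div_le_one hVpos]; linarith)
    have expand : Zuy / A * (Real.logb 2 (Zuy / U) + Real.logb 2 ((U + V) / A)) +
        Zvy / A * (Real.logb 2 (Zvy / V) + Real.logb 2 ((U + V) / A))
        = Zuy / A * Real.logb 2 (Zuy / U) + Zvy / A * Real.logb 2 (Zvy / V) +
          (Zuy / A + Zvy / A) * Real.logb 2 ((U + V) / A) := by ring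
    rw [expand, hsum, one_mul]
    linarith [mul_nonpos_of_nonneg_of_nonpos hp.le hb1,
      mul_nonpos_of_nonneg_of_nonpos h1ppos.le hb2]
  refine key.trans (Real.logb_le_logb_of_le one_lt_two (by positivity) ?_)
  have hZuyA : Zuy ≤ A := by linarith
  have hRw : U + V ≤ U + w := by linarith
  exact div_le_div₀ (by positivity) hRw hZuy hZuyA
end

section
/- Information-gain upper bound for one leaf: under the leaf decomposition setup with Z_u^y > 0 for all y, Z_ū ≤ w, and per-label unseen-weight bounds Z_ū^y ≤ w^y, it holds that −Σ_y Z_ρ^y·lg(Z_ρ^y/Z_ρ) ≤ −Σ_y Z_u^y·lg(Z_u^y/Z_u) + w·lg|Y| + Σ_y (Z_u^y + w^y)·lg((Z_u + w)/Z_u^y). -/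
open Finset

/-- information-gain upper bound for one leaf. -/
theorem stmt13 {Y : Type*} [Fintype Y]
    (Zu Zv wy : Y → ℝ) (w : ℝ)
    (hZu : ∀ y, 0 < Zu y) (hZv : ∀ y, 0 ≤ Zv y)
    (hw : (∑ y, Zv y) ≤ w) (hwy : ∀ y, Zv y ≤ wy y) :
    -(∑ y, (Zu y + Zv y) *
        Real.logb 2 ((Zu y + Zv y) / ((∑ z, Zu z) + ∑ z, Zv z)))
      ≤ (-(∑ y, Zu y * Real.logb 2 (Zu y / ∑ z, Zu z)))
        + w * Real.logb 2 (Fintype.card Y)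
        + ∑ y, (Zu y + wy y) * Real.logb 2 (((∑ z, Zu z) + w) / Zu y) := by
  rcases isEmpty_or_nonempty Y with hY | hY
  · simp
  set A := ∑ z, Zu z with hA
  set B := ∑ z, Zv z with hB
  have hApos : 0 < A := Finset.sum_pos (fun y _ => hZu y) univ_nonempty
  have hBnn : 0 ≤ B := Finset.sum_nonneg (fun y _ => hZv y)
  have hwnn : 0 ≤ w := hBnn.trans hw
  have hTpos : 0 < A + B := by linarith
  have hle : ∀ y, Zu y ≤ A := fun y =>
    Finset.single_le_sum (fun z _ => (hZu z).le) (mem_univ y)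
  have h1 : 0 ≤ -(∑ y, Zu y * Real.logb 2 (Zu y / A)) := by
    rw [neg_nonneg]
    apply Finset.sum_nonpos
    intro y _
    apply mul_nonpos_of_nonneg_of_nonpos (hZu y).le
    apply Real.logb_nonpos one_lt_two (div_nonneg (hZu y).le hApos.le)
    rw [div_le_one hApos]
    exact hle y
  have h2 : 0 ≤ w * Real.logb 2 (Fintype.card Y) := by
    apply mul_nonneg hwnn
    apply Real.logb_nonneg one_lt_two
    exact_mod_cast Fintype.card_pos
  have h3 : -(∑ y, (Zu y + Zv y) * Real.logb 2 ((Zu y + Zv y) / (A + B)))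
      ≤ ∑ y, (Zu y + wy y) * Real.logb 2 ((A + w) / Zu y) := by
    rw [neg_le, ← Finset.sum_neg_distrib]
    apply Finset.sum_le_sum
    intro y _
    have hay := hZu y
    have hby := hZv y
    have habpos : 0 < Zu y + Zv y := by linarith
    have hleA := hle y
    have hL : 0 ≤ Real.logb 2 ((A + w) / Zu y) := by
      apply Real.logb_nonneg one_lt_two
      rw [le_div_iff₀ hay]
      linarith
    have hinv : Real.logb 2 ((Zu y + Zv y) / (A + B))
        = -Real.logb 2 ((A + B) / (Zu y + Zv y)) := by
      rw [← Real.logb_inv, inv_div]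
    have hdiv : (A + B) / (Zu y + Zv y) ≤ (A + w) / Zu y := by
      apply div_le_div₀ (by linarith) (by linarith) hay (by linarith)
    have hlog : Real.logb 2 ((A + B) / (Zu y + Zv y)) ≤ Real.logb 2 ((A + w) / Zu y) :=
      Real.logb_le_logb_of_le one_lt_two (by positivity) hdiv
    have hm1 := mul_le_mul_of_nonneg_left hlog habpos.le
    have hm2 := mul_le_mul_of_nonneg_right (show Zu y + Zv y ≤ Zu y + wy y by
      have := hwy y; linarith) hL
    rw [hinv]
    nlinarith
  linarith
end
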